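/- Let T be an (m, β) row paving of A_=, let L be a Hoffman constant for the system, assume n_i ≥ 1, and set p = βm/(n_i + βm). For x ∈ ℝ^d, let x_τ denote the orthogonal projection of x onto {y : A_τ y = b_τ} for τ ∈ T, and let x_i = x − max(⟨a_i, x⟩ − b_i, 0)·a_i for i ∈ I_≤. Then the one-step expected squared distance of Algorithm 1 satisfies p·(1/m)·Σ_{τ∈T} d(x_τ, S)² + (1 − p)·(1/n_i)·Σ_{i∈I_≤} d(x_i, S)² ≤ (1 − 1/(L²(n_i + βm)))·d(x, S)². -/

import Mathlib

open scoped RealInnerProductSpace BigOperators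

noncomputable section

/-- An `(m, β)` row paving of the rows of `a` indexed by `I`: a partition of `I` into `m`
nonempty blocks `T 0, …, T (m-1)` such that for each block `τ`, the row submatrix `A_τ` with
rows `(a i)_{i ∈ τ}` satisfies `λ_max(A_τ A_τ*) ≤ β`, stated equivalently as the quadratic
bound `‖A_τ x‖² = ∑_{i ∈ τ} ⟪a i, x⟫² ≤ β ‖x‖²` for all `x`. -/
def IsRowPaving {n d : ℕ} (a : Fin n → EuclideanSpace ℝ (Fin d)) (I : Finset (Fin n))
    (m : ℕ) (β : ℝ) (T : Fin m → Finset (Fin n)) : Prop :=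
  (∀ k, (T k).Nonempty) ∧
  (∀ k l, k ≠ l → Disjoint (T k) (T l)) ∧
  (Finset.univ.biUnion T = I) ∧
  (∀ k, ∀ x : EuclideanSpace ℝ (Fin d), ∑ i ∈ T k, ⟪a i, x⟫ ^ 2 ≤ β * ‖x‖ ^ 2)

/-- **Lemma (one-step expected progress of Algorithm 1).**
For a standardized system with nonempty feasible set `S`, an `(m, β)` row paving `T` of the
equality submatrix `A_=`, a Hoffman constant `L`, `n_i ≥ 1`, and `p = βm/(n_i + βm)`:
if `x_τ` denotes the orthogonal projection of `x` onto `{y : A_τ y = b_τ}` for `τ ∈ T`, and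
`x_i = x − max(⟪a i, x⟫ − b i, 0) • a i` for `i ∈ I_≤`, then
`p (1/m) Σ_τ d(x_τ, S)² + (1 − p)(1/n_i) Σ_{i ∈ I_≤} d(x_i, S)²
  ≤ (1 − 1/(L²(n_i + βm))) d(x, S)²`. -/
private lemma aux_discriminant_zero (c s : ℝ) (hs : 0 ≤ s)
    (h : ∀ t : ℝ, 2 * t * c ≤ t ^ 2 * s) : c = 0 := by
  have h1 := h (c / (s + 1))
  have hs1 : (0:ℝ) < s + 1 := by linarith
  have h2 : 2 * (c/(s+1)) * c * (s+1)^2 ≤ (c/(s+1))^2 * s * (s+1)^2 := by nlinarith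
  have e1 : 2 * (c/(s+1)) * c * (s+1)^2 = 2 * c^2 * (s+1) := by field_simp
  have e2 : (c/(s+1))^2 * s * (s+1)^2 = c^2 * s := by field_simp
  rw [e1, e2] at h2
  nlinarith [sq_nonneg c]

private lemma aux_card_filter_ge (ne ni : ℕ) :
    ((Finset.univ.filter fun i : Fin (ne + ni) => ne ≤ (i : ℕ))).card = ni := by
  rw [Finset.card_filter]
  rw [Fin.sum_univ_eq_sum_range (fun j => if ne ≤ j then 1 else 0)]
  induction ni with
  | zero =>
    simp only [Nat.add_zero]
    rw [Finset.sum_ite_of_false, Finset.sum_const_zero]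
    intro j hj; simpa using Finset.mem_range.mp hj
  | succ n ih =>
    rw [Nat.add_succ, Finset.sum_range_succ, ih, if_pos (Nat.le_add_right _ _)]

set_option maxHeartbeats 1000000 in
theorem algorithm1_one_step_expected_progress
    {ne ni d m : ℕ} (hni : 0 < ni) (hm : 0 < m)
    (a : Fin (ne + ni) → EuclideanSpace ℝ (Fin d)) (b : Fin (ne + ni) → ℝ)
    (ha : ∀ i, ‖a i‖ = 1)
    (S : Set (EuclideanSpace ℝ (Fin d)))
    (hSdef : S = {x | (∀ i : Fin (ne + ni), (i : ℕ) < ne → ⟪a i, x⟫ = b i) ∧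
                      (∀ i : Fin (ne + ni), ne ≤ (i : ℕ) → ⟪a i, x⟫ ≤ b i)})
    (hSne : S.Nonempty)
    (β : ℝ) (hβ : 0 < β)
    (T : Fin m → Finset (Fin (ne + ni)))
    (hT : IsRowPaving a (Finset.univ.filter fun i : Fin (ne + ni) => (i : ℕ) < ne) m β T)
    (L : ℝ) (hL : 0 < L)
    (hHoffman : ∀ x : EuclideanSpace ℝ (Fin d), Metric.infDist x S ≤
      L * Real.sqrt (∑ i : Fin (ne + ni), (if (i : ℕ) < ne then ⟪a i, x⟫ - b i
                           else max (⟪a i, x⟫ - b i) 0) ^ 2))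
    (x : EuclideanSpace ℝ (Fin d))
    -- xτ k is the orthogonal projection of x onto {y : A_(T k) y = b_(T k)}
    (xτ : Fin m → EuclideanSpace ℝ (Fin d))
    (hproj : ∀ k : Fin m,
      (∀ i ∈ T k, ⟪a i, xτ k⟫ = b i) ∧
      (∀ y : EuclideanSpace ℝ (Fin d), (∀ i ∈ T k, ⟪a i, y⟫ = b i) → ‖x - xτ k‖ ≤ ‖x - y‖)) :
    (β * m / (ni + β * m)) * ((1 / m) * ∑ k, Metric.infDist (xτ k) S ^ 2) +
        (1 - β * m / (ni + β * m)) *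
          ((1 / ni) * ∑ i ∈ (Finset.univ.filter fun i : Fin (ne + ni) => ne ≤ (i : ℕ)),
            Metric.infDist (x - max (⟪a i, x⟫ - b i) 0 • a i) S ^ 2) ≤
      (1 - 1 / (L ^ 2 * (ni + β * m))) * Metric.infDist x S ^ 2 := by
  classical
  -- basic positivity
  have mpos : (0:ℝ) < m := by exact_mod_cast hm
  have nipos : (0:ℝ) < ni := by exact_mod_cast hni
  set N : ℝ := (ni : ℝ) + β * m with hNdef
  have hNpos : 0 < N := by positivity
  -- S is closed
  have hclosed : IsClosed S := by
    rw [hSdef]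
    have hrw : {x : EuclideanSpace ℝ (Fin d) |
        (∀ i : Fin (ne + ni), (i : ℕ) < ne → ⟪a i, x⟫ = b i) ∧
        (∀ i : Fin (ne + ni), ne ≤ (i : ℕ) → ⟪a i, x⟫ ≤ b i)} =
        (⋂ i : Fin (ne + ni), {x | (i : ℕ) < ne → ⟪a i, x⟫ = b i}) ∩
        (⋂ i : Fin (ne + ni), {x | ne ≤ (i : ℕ) → ⟪a i, x⟫ ≤ b i}) := by
      ext y; simp [Set.mem_iInter]
    rw [hrw]
    apply IsClosed.inter
    · apply isClosed_iInter; intro i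
      by_cases h : (i : ℕ) < ne
      · simp only [h, forall_true_left]
        exact isClosed_eq ((innerSL ℝ (a i)).continuous) continuous_const
      · simp only [h]; simp
    · apply isClosed_iInter; intro i
      by_cases h : ne ≤ (i : ℕ)
      · simp only [h, forall_true_left]
        exact isClosed_le ((innerSL ℝ (a i)).continuous) continuous_const
      · simp only [h]; simp
  obtain ⟨z, hzS, hdz⟩ := hclosed.exists_infDist_eq_dist hSne x
  have hz := hSdef ▸ hzS
  have hz1 : ∀ i : Fin (ne + ni), (i : ℕ) < ne → ⟪a i, z⟫ = b i := hz.1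
  have hz2 : ∀ i : Fin (ne + ni), ne ≤ (i : ℕ) → ⟪a i, z⟫ ≤ b i := hz.2
  set D : ℝ := dist x z with hD
  set r : Fin (ne + ni) → ℝ := fun i => ⟪a i, x⟫ - b i with hr
  obtain ⟨hTne, hTdisj, hTcover, hTbound⟩ := hT
  -- block indices are equality indices
  have hTeq : ∀ k, ∀ i ∈ T k, (i : ℕ) < ne := by
    intro k i hi
    have : i ∈ Finset.univ.biUnion T := Finset.mem_biUnion.mpr ⟨k, Finset.mem_univ k, hi⟩
    rw [hTcover] at this
    exact (Finset.mem_filter.mp this).2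
  -- per-block bound
  have hblock : ∀ k : Fin m,
      Metric.infDist (xτ k) S ^ 2 + (1 / β) * ∑ i ∈ T k, (r i) ^ 2 ≤ D ^ 2 := by
    intro k
    obtain ⟨hfeas, hmin⟩ := hproj k
    set p := xτ k with hp
    have hzk : ∀ i ∈ T k, ⟪a i, z⟫ = b i := fun i hi => hz1 i (hTeq k i hi)
    -- orthogonality
    have hc : ⟪x - p, z - p⟫ = 0 := by
      set c : ℝ := ⟪x - p, z - p⟫ with hcdef
      set s : ℝ := ‖z - p‖ ^ 2 with hsdef
      have hs : 0 ≤ s := by positivity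
      have key : ∀ t : ℝ, 2 * t * c ≤ t ^ 2 * s := by
        intro t
        have hy : ∀ i ∈ T k, ⟪a i, p + t • (z - p)⟫ = b i := by
          intro i hi
          rw [inner_add_right, inner_smul_right, inner_sub_right, hfeas i hi, hzk i hi]
          ring
        have h1 := hmin _ hy
        have h2 : ‖x - p‖ ^ 2 ≤ ‖x - (p + t • (z - p))‖ ^ 2 := by
          apply pow_le_pow_left₀ (norm_nonneg _) h1
        have h3 : x - (p + t • (z - p)) = (x - p) - t • (z - p) := by
          abel
        have hexp : ‖(x - p) - t • (z - p)‖ ^ 2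
            = ‖x - p‖ ^ 2 - 2 * (t * c) + t ^ 2 * s := by
          rw [@norm_sub_sq_real, real_inner_smul_right, norm_smul]
          simp only [Real.norm_eq_abs, mul_pow, sq_abs]
          rw [hcdef, hsdef]
        rw [h3, hexp] at h2
        nlinarith [h2]
      exact aux_discriminant_zero c s hs key
    -- Pythagoras
    have hpyth : ‖p - z‖ ^ 2 = D ^ 2 - ‖x - p‖ ^ 2 := by
      have hxz : x - z = (x - p) - (z - p) := by abel
      have : D ^ 2 = ‖x - p‖ ^ 2 + ‖z - p‖ ^ 2 := by
        rw [hD, dist_eq_norm, hxz, @norm_sub_sq_real, hc]; ring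
      rw [norm_sub_rev p z]; linarith
    -- residual bound
    have hres : ∑ i ∈ T k, (r i) ^ 2 ≤ β * ‖x - p‖ ^ 2 := by
      have h1 := hTbound k (x - p)
      have h2 : ∀ i ∈ T k, ⟪a i, x - p⟫ = r i := by
        intro i hi; rw [inner_sub_right, hfeas i hi]
      rw [Finset.sum_congr rfl fun i hi => by rw [h2 i hi]] at h1
      exact h1
    have hdle : Metric.infDist p S ≤ ‖p - z‖ := by
      rw [← dist_eq_norm]; exact Metric.infDist_le_dist_of_mem hzS
    have hd2 : Metric.infDist p S ^ 2 ≤ ‖p - z‖ ^ 2 :=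
      pow_le_pow_left₀ Metric.infDist_nonneg hdle 2
    have hβ' : (1/β) * ∑ i ∈ T k, (r i) ^ 2 ≤ ‖x - p‖ ^ 2 := by
      rw [div_mul_eq_mul_div, one_mul, div_le_iff₀ hβ]
      linarith [hres]
    linarith [hd2, hpyth ▸ hd2]
  -- per-inequality-row bound
  have hrow : ∀ i ∈ (Finset.univ.filter fun i : Fin (ne + ni) => ne ≤ (i : ℕ)),
      Metric.infDist (x - max (⟪a i, x⟫ - b i) 0 • a i) S ^ 2 + (max (r i) 0) ^ 2 ≤ D ^ 2 := by
    intro i hi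
    have hine : ne ≤ (i : ℕ) := (Finset.mem_filter.mp hi).2
    set t : ℝ := max (r i) 0 with htdef
    have ht0 : 0 ≤ t := le_max_right _ _
    have hinner : r i ≤ ⟪a i, x - z⟫ := by
      rw [inner_sub_right]
      have := hz2 i hine
      simp only [hr]; linarith
    have htt : t ^ 2 ≤ t * ⟪a i, x - z⟫ := by
      rcases le_or_gt (r i) 0 with h | h
      · have : t = 0 := max_eq_right h
        simp [this]
      · have : t = r i := max_eq_left h.le
        rw [sq]
        apply mul_le_mul_of_nonneg_left _ ht0
        rw [this]; exact hinner
    have hexp : ‖(x - t • a i) - z‖ ^ 2 = D ^ 2 - 2 * t * ⟪a i, x - z⟫ + t ^ 2 := by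
      have h3 : (x - t • a i) - z = (x - z) - t • a i := by abel
      rw [h3, @norm_sub_sq_real, real_inner_smul_right, norm_smul,
        real_inner_comm, ha i, hD, dist_eq_norm]
      simp only [Real.norm_eq_abs, mul_pow, sq_abs, mul_one, one_pow]
      ring
    have hdle : Metric.infDist (x - t • a i) S ≤ ‖(x - t • a i) - z‖ := by
      rw [← dist_eq_norm]; exact Metric.infDist_le_dist_of_mem hzS
    have hd2 : Metric.infDist (x - t • a i) S ^ 2 ≤ ‖(x - t • a i) - z‖ ^ 2 :=
      pow_le_pow_left₀ Metric.infDist_nonneg hdle 2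
    have : Metric.infDist (x - t • a i) S ^ 2 + t ^ 2 ≤ D ^ 2 := by
      rw [hexp] at hd2; nlinarith [htt]
    simpa [htdef, hr] using this
  -- sums
  set E : ℝ := ∑ i ∈ (Finset.univ.filter fun i : Fin (ne + ni) => (i : ℕ) < ne), (r i) ^ 2 with hE
  set F : ℝ := ∑ i ∈ (Finset.univ.filter fun i : Fin (ne + ni) => ne ≤ (i : ℕ)), (max (r i) 0) ^ 2 with hF
  have hE0 : 0 ≤ E := Finset.sum_nonneg fun i _ => sq_nonneg _
  have hF0 : 0 ≤ F := Finset.sum_nonneg fun i _ => sq_nonneg _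
  -- Hoffman squared
  have hHof : D ^ 2 ≤ L ^ 2 * (E + F) := by
    have h1 := hHoffman x
    rw [hdz] at h1
    have hsum : (∑ i : Fin (ne + ni), (if (i : ℕ) < ne then ⟪a i, x⟫ - b i
        else max (⟪a i, x⟫ - b i) 0) ^ 2) = E + F := by
      rw [← Finset.sum_filter_add_sum_filter_not Finset.univ (fun i : Fin (ne + ni) => (i : ℕ) < ne)]
      congr 1
      · apply Finset.sum_congr rfl; intro i hi
        have := (Finset.mem_filter.mp hi).2
        simp [this, hr]
      · rw [hF]
        apply Finset.sum_congr
        · congr 1; ext i; simp [not_lt]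
        · intro i hi
          have := (Finset.mem_filter.mp hi).2
          simp [Nat.not_lt.mpr this, hr]
    rw [hsum] at h1
    have hs0 : 0 ≤ E + F := by linarith
    have h2 : D ≤ L * Real.sqrt (E + F) := h1
    have h3 : D ^ 2 ≤ (L * Real.sqrt (E + F)) ^ 2 :=
      pow_le_pow_left₀ dist_nonneg h2 2
    rw [mul_pow, Real.sq_sqrt hs0] at h3
    exact h3
  -- sum of block bounds
  have hsumblock : (∑ k, Metric.infDist (xτ k) S ^ 2) + (1 / β) * E ≤ m * D ^ 2 := by
    have h1 : ∑ k : Fin m, (Metric.infDist (xτ k) S ^ 2 + (1 / β) * ∑ i ∈ T k, (r i) ^ 2)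
        ≤ ∑ _k : Fin m, D ^ 2 := Finset.sum_le_sum fun k _ => hblock k
    rw [Finset.sum_add_distrib, ← Finset.mul_sum, Finset.sum_const, Finset.card_univ,
      Fintype.card_fin, nsmul_eq_mul] at h1
    have h2 : ∑ k : Fin m, ∑ i ∈ T k, (r i) ^ 2 = E := by
      rw [hE, ← hTcover, Finset.sum_biUnion]
      intro k _ l _ hkl
      exact hTdisj k l hkl
    rw [h2] at h1
    exact h1
  -- sum of row bounds
  have hcardni : ((Finset.univ.filter fun i : Fin (ne + ni) => ne ≤ (i : ℕ))).card = ni :=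
    aux_card_filter_ge ne ni
  have hsumrow : (∑ i ∈ (Finset.univ.filter fun i : Fin (ne + ni) => ne ≤ (i : ℕ)),
      Metric.infDist (x - max (⟪a i, x⟫ - b i) 0 • a i) S ^ 2) + F ≤ ni * D ^ 2 := by
    have h1 : ∑ i ∈ (Finset.univ.filter fun i : Fin (ne + ni) => ne ≤ (i : ℕ)),
        (Metric.infDist (x - max (⟪a i, x⟫ - b i) 0 • a i) S ^ 2 + (max (r i) 0) ^ 2)
        ≤ ∑ _i ∈ (Finset.univ.filter fun i : Fin (ne + ni) => ne ≤ (i : ℕ)), D ^ 2 :=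
      Finset.sum_le_sum hrow
    rw [Finset.sum_add_distrib, Finset.sum_const, hcardni, nsmul_eq_mul] at h1
    exact h1
  -- combine
  set A1 : ℝ := ∑ k, Metric.infDist (xτ k) S ^ 2 with hA1def
  set A2 : ℝ := ∑ i ∈ (Finset.univ.filter fun i : Fin (ne + ni) => ne ≤ (i : ℕ)),
      Metric.infDist (x - max (⟪a i, x⟫ - b i) 0 • a i) S ^ 2 with hA2def
  rw [hdz]
  set q : ℝ := β * m / N with hq
  have hq0 : 0 ≤ q := by positivity
  have hq1 : 1 - q = ni / N := by
    rw [hq, hNdef]; field_simp; ring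
  have hq1' : 0 ≤ 1 - q := by rw [hq1]; positivity
  have hstep1 : q * ((1/m) * A1) ≤ q * D ^ 2 - (1/N) * E := by
    have h1 : (1/m) * A1 ≤ D ^ 2 - (1/m) * ((1/β) * E) := by
      have := mul_le_mul_of_nonneg_left hsumblock (le_of_lt (one_div_pos.mpr mpos))
      rw [mul_add] at this
      have e : (1/(m:ℝ)) * (m * D ^ 2) = D ^ 2 := by field_simp
      rw [e] at this
      linarith
    have h2 := mul_le_mul_of_nonneg_left h1 hq0
    have e2 : q * (D ^ 2 - (1/m) * ((1/β) * E)) = q * D ^ 2 - (1/N) * E := by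
      rw [hq]
      field_simp
    rw [e2] at h2
    exact h2
  have hstep2 : (1 - q) * ((1/ni) * A2) ≤ (1 - q) * D ^ 2 - (1/N) * F := by
    have h1 : (1/ni) * A2 ≤ D ^ 2 - (1/ni) * F := by
      have := mul_le_mul_of_nonneg_left hsumrow (le_of_lt (one_div_pos.mpr nipos))
      rw [mul_add] at this
      have e : (1/(ni:ℝ)) * (ni * D ^ 2) = D ^ 2 := by field_simp
      rw [e] at this
      linarith
    have h2 := mul_le_mul_of_nonneg_left h1 hq1'
    have e2 : (1 - q) * (D ^ 2 - (1/ni) * F) = (1 - q) * D ^ 2 - (1/N) * F := by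
      rw [hq1]
      field_simp
    rw [e2] at h2
    exact h2
  have hfin : D ^ 2 * (1 / (L ^ 2 * N)) ≤ (1/N) * (E + F) := by
    rw [mul_one_div, div_le_iff₀ (by positivity : (0:ℝ) < L ^ 2 * N)]
    have : (1/N) * (E + F) * (L ^ 2 * N) = L ^ 2 * (E + F) := by field_simp
    rw [this]
    exact hHof
  have hgoal : q * ((1/m) * A1) + (1 - q) * ((1/ni) * A2) ≤ (1 - 1/(L^2 * N)) * D ^ 2 := by
    have expand : (1 - 1/(L^2 * N)) * D ^ 2 = D ^ 2 - D ^ 2 * (1/(L^2 * N)) := by ring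
    rw [expand]
    have : q * D ^ 2 + (1 - q) * D ^ 2 = D ^ 2 := by ring
    nlinarith [hstep1, hstep2, hfin]
  exact hgoal
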